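/- Let n = 3 and Λ the weakly decreasing triples of nonnegative integers. For μ ∈ Λ define ē_μ := ē_1^{μ_1−μ_2} ē_2^{μ_2−μ_3} ē_3^{μ_3}, where ē_1 = z_1 − z_2 + z_3, ē_2 = z_2, ē_3 = z_1 z_3. Then the leading monomial of ē_μ in the lexicographic order on (z_1, z_2, z_3) is z^{[μ]} = z_1^{μ_1−μ_2+μ_3} z_2^{μ_2−μ_3} z_3^{μ_3}, and consequently the ē_μ for μ ∈ Λ are linearly independent over ℚ. -/
import Mathlib


open MvPolynomial

/-- `ē_1 = z_1 − z_2 + z_3`. -/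
noncomputable def eb1 : MvPolynomial (Fin 3) ℚ := X 0 - X 1 + X 2
/-- `ē_2 = z_2`. -/
noncomputable def eb2 : MvPolynomial (Fin 3) ℚ := X 1
/-- `ē_3 = z_1 z_3`. -/
noncomputable def eb3 : MvPolynomial (Fin 3) ℚ := X 0 * X 2

/-- `ē_μ = ē_1^{μ_1−μ_2} ē_2^{μ_2−μ_3} ē_3^{μ_3}`. -/
noncomputable def ebMu (mu : Fin 3 → ℕ) : MvPolynomial (Fin 3) ℚ :=
  eb1 ^ (mu 0 - mu 1) * eb2 ^ (mu 1 - mu 2) * eb3 ^ (mu 2)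

/-- The exponent vector `[μ] = (μ_1−μ_2+μ_3, μ_2−μ_3, μ_3)` as a `Finsupp`. -/
noncomputable def brkMu (mu : Fin 3 → ℕ) : Fin 3 →₀ ℕ :=
  Finsupp.equivFunOnFinite.symm ![mu 0 - mu 1 + mu 2, mu 1 - mu 2, mu 2]

/-- Strict lexicographic order on exponent vectors, `z_1` most significant. -/
def LexLt (a b : Fin 3 →₀ ℕ) : Prop :=
  a 0 < b 0 ∨ (a 0 = b 0 ∧ (a 1 < b 1 ∨ (a 1 = b 1 ∧ a 2 < b 2)))

lemma forall_fin3 {P : Fin 3 → Prop} (h0 : P 0) (h1 : P 1) (h2 : P 2) : ∀ i, P i := by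
  intro i
  fin_cases i
  · exact h0
  · exact h1
  · exact h2
lemma eb1_pow_succ (a : ℕ) : eb1 ^ (a + 1) = eb1 ^ a * X 0 - eb1 ^ a * X 1 + eb1 ^ a * X 2 := by
  rw [pow_succ]; rw [eb1]; ring

lemma eb1_pow_coeff_le (a : ℕ) : ∀ ν : Fin 3 →₀ ℕ, coeff ν (eb1 ^ a) ≠ 0 →
    ν 0 ≤ a ∧ (ν 0 = a → ν = Finsupp.single 0 a) := by
  induction a with
  | zero =>
    intro ν h
    rw [pow_zero, coeff_one] at h
    have hν : ν = 0 := by by_contra hne; rw [if_neg (fun hh => hne hh.symm)] at h; exact h rfl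
    subst hν
    simp
  | succ a ih =>
    intro ν h
    rw [eb1_pow_succ, coeff_add, coeff_sub,
      coeff_mul_X', coeff_mul_X', coeff_mul_X'] at h
    have h3 : (0 ∈ ν.support ∧ coeff (ν - Finsupp.single 0 1) (eb1 ^ a) ≠ 0)
        ∨ (1 ∈ ν.support ∧ coeff (ν - Finsupp.single 1 1) (eb1 ^ a) ≠ 0)
        ∨ (2 ∈ ν.support ∧ coeff (ν - Finsupp.single 2 1) (eb1 ^ a) ≠ 0) := by
      by_contra hc
      push_neg at hc
      apply h
      split_ifs with hh1 hh2 hh3 hh2 hh3 hh3 <;> simp_all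
    rcases h3 with ⟨hm, hc⟩ | ⟨hm, hc⟩ | ⟨hm, hc⟩
    · have hν0 : ν 0 ≠ 0 := Finsupp.mem_support_iff.mp hm
      obtain ⟨hle, heq⟩ := ih _ hc
      have hsub : ((ν - Finsupp.single (0 : Fin 3) 1 : Fin 3 →₀ ℕ)) 0 = ν 0 - 1 := by
        simp [Finsupp.tsub_apply]
      rw [hsub] at hle heq
      constructor
      · omega
      · intro hν
        have h0 : ν 0 - 1 = a := by omega
        have := heq h0
        ext i
        have hi := DFunLike.congr_fun this i
        simp only [Finsupp.tsub_apply] at hi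
        fin_cases i <;> simp_all [Finsupp.single_apply] <;> omega
    · obtain ⟨hle, heq⟩ := ih _ hc
      have hsub : ((ν - Finsupp.single (1 : Fin 3) 1 : Fin 3 →₀ ℕ)) 0 = ν 0 := by
        simp [Finsupp.tsub_apply, Finsupp.single_apply]
      rw [hsub] at hle heq
      exact ⟨by omega, fun hν => absurd hν (by omega)⟩
    · obtain ⟨hle, heq⟩ := ih _ hc
      have hsub : ((ν - Finsupp.single (2 : Fin 3) 1 : Fin 3 →₀ ℕ)) 0 = ν 0 := by
        simp [Finsupp.tsub_apply, Finsupp.single_apply]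
      rw [hsub] at hle heq
      exact ⟨by omega, fun hν => absurd hν (by omega)⟩

lemma eb1_pow_coeff_top (a : ℕ) : coeff (Finsupp.single 0 a) (eb1 ^ a) = 1 := by
  induction a with
  | zero => simp
  | succ a ih =>
    rw [eb1_pow_succ, coeff_add, coeff_sub,
      coeff_mul_X', coeff_mul_X', coeff_mul_X']
    have h0 : (0 : Fin 3) ∈ (Finsupp.single (0 : Fin 3) (a+1)).support := by
      simp
    have h1 : (1 : Fin 3) ∉ (Finsupp.single (0 : Fin 3) (a+1)).support := by
      simp [Finsupp.single_apply]
    have h2 : (2 : Fin 3) ∉ (Finsupp.single (0 : Fin 3) (a+1)).support := by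
      simp [Finsupp.single_apply]
    rw [if_pos h0, if_neg h1, if_neg h2]
    have hs : Finsupp.single (0 : Fin 3) (a+1) - Finsupp.single 0 1 = Finsupp.single 0 a := by
      ext i
      fin_cases i <;> simp [Finsupp.single_apply]
    rw [hs, ih]
    ring

noncomputable def Dmu (mu : Fin 3 → ℕ) : Fin 3 →₀ ℕ :=
  Finsupp.single 1 (mu 1 - mu 2) + (Finsupp.single 0 (mu 2) + Finsupp.single 2 (mu 2))

lemma Dmu_apply (mu : Fin 3 → ℕ) : Dmu mu 0 = mu 2 ∧ Dmu mu 1 = mu 1 - mu 2 ∧ Dmu mu 2 = mu 2 := by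
  refine ⟨?_, ?_, ?_⟩ <;> simp [Dmu, Finsupp.single_apply]

lemma brkMu_apply (mu : Fin 3 → ℕ) :
    brkMu mu 0 = mu 0 - mu 1 + mu 2 ∧ brkMu mu 1 = mu 1 - mu 2 ∧ brkMu mu 2 = mu 2 := by
  refine ⟨?_, ?_, ?_⟩ <;> simp [brkMu]

lemma ebMu_eq (mu : Fin 3 → ℕ) :
    ebMu mu = eb1 ^ (mu 0 - mu 1) * monomial (Dmu mu) 1 := by
  rw [ebMu, Dmu, eb2, eb3, mul_pow, X_pow_eq_monomial, X_pow_eq_monomial, X_pow_eq_monomial,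
    monomial_mul, mul_assoc, monomial_mul]
  norm_num

lemma ebMu_coeff (mu : Fin 3 → ℕ) (ν : Fin 3 →₀ ℕ) :
    coeff ν (ebMu mu) = if Dmu mu ≤ ν then coeff (ν - Dmu mu) (eb1 ^ (mu 0 - mu 1)) else 0 := by
  rw [ebMu_eq, coeff_mul_monomial']
  split_ifs <;> simp

lemma part1 (mu : Fin 3 → ℕ) (h10 : mu 1 ≤ mu 0) (h21 : mu 2 ≤ mu 1) :
    coeff (brkMu mu) (ebMu mu) = 1 ∧
      ∀ ν : Fin 3 →₀ ℕ, coeff ν (ebMu mu) ≠ 0 → ν = brkMu mu ∨ LexLt ν (brkMu mu) := by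
  obtain ⟨hD0, hD1, hD2⟩ := Dmu_apply mu
  obtain ⟨hB0, hB1, hB2⟩ := brkMu_apply mu
  have hDle : Dmu mu ≤ brkMu mu := by
    rw [Finsupp.le_def]
    refine forall_fin3 ?_ ?_ ?_
    · rw [hD0, hB0]; omega
    · rw [hD1, hB1]
    · rw [hD2, hB2]
  have hBD : brkMu mu - Dmu mu = Finsupp.single 0 (mu 0 - mu 1) := by
    apply Finsupp.ext
    refine forall_fin3 ?_ ?_ ?_ <;> rw [Finsupp.tsub_apply]
    · rw [hD0, hB0]; simp [Finsupp.single_apply]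
    · rw [hD1, hB1]; simp [Finsupp.single_apply]
    · rw [hD2, hB2]; simp [Finsupp.single_apply]
  constructor
  · rw [ebMu_coeff, if_pos hDle, hBD, eb1_pow_coeff_top]
  · intro ν hν
    rw [ebMu_coeff] at hν
    by_cases hle : Dmu mu ≤ ν
    · rw [if_pos hle] at hν
      obtain ⟨hle2, heq⟩ := eb1_pow_coeff_le _ _ hν
      have hsub0 : ((ν - Dmu mu : Fin 3 →₀ ℕ)) 0 = ν 0 - mu 2 := by
        rw [Finsupp.tsub_apply, hD0]
      have hge : ∀ i, Dmu mu i ≤ ν i := Finsupp.le_def.mp hle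
      have hge0 := hge 0; have hge1 := hge 1; have hge2 := hge 2
      rw [hD0] at hge0; rw [hD1] at hge1; rw [hD2] at hge2
      rw [hsub0] at hle2 heq
      rcases Nat.lt_or_ge (ν 0 - mu 2) (mu 0 - mu 1) with hlt | hgeq
      · right; left
        rw [hB0]; omega
      · have h0 : ν 0 - mu 2 = mu 0 - mu 1 := by omega
        have hsing := heq h0
        left
        have hi0 := DFunLike.congr_fun hsing 0
        have hi1 := DFunLike.congr_fun hsing 1
        have hi2 := DFunLike.congr_fun hsing 2
        rw [Finsupp.tsub_apply] at hi0 hi1 hi2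
        rw [hD0] at hi0; rw [hD1] at hi1; rw [hD2] at hi2
        simp [Finsupp.single_apply] at hi0 hi1 hi2
        apply Finsupp.ext
        refine forall_fin3 ?_ ?_ ?_
        · rw [hB0]; omega
        · rw [hB1]; omega
        · rw [hB2]; omega
    · rw [if_neg hle] at hν
      exact absurd rfl hν

noncomputable def key (ν : Fin 3 →₀ ℕ) : ℕ ×ₗ (ℕ ×ₗ ℕ) := toLex (ν 0, toLex (ν 1, ν 2))

lemma lexLt_iff (a b : Fin 3 →₀ ℕ) : LexLt a b ↔ key a < key b := by
  simp [LexLt, key, Prod.Lex.lt_iff]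

lemma brkMu_inj {mu nu : Fin 3 → ℕ} (hm1 : mu 1 ≤ mu 0) (hm2 : mu 2 ≤ mu 1)
    (hn1 : nu 1 ≤ nu 0) (hn2 : nu 2 ≤ nu 1) (h : brkMu mu = brkMu nu) : mu = nu := by
  obtain ⟨hA0, hA1, hA2⟩ := brkMu_apply mu
  obtain ⟨hC0, hC1, hC2⟩ := brkMu_apply nu
  have e0 := DFunLike.congr_fun h 0
  have e1 := DFunLike.congr_fun h 1
  have e2 := DFunLike.congr_fun h 2
  rw [hA0, hC0] at e0; rw [hA1, hC1] at e1; rw [hA2, hC2] at e2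
  have hall : ∀ i, mu i = nu i := forall_fin3 (by omega) (by omega) (by omega)
  funext i
  exact hall i

lemma part2 : LinearIndependent ℚ
    (fun mu : {a : Fin 3 → ℕ // a 1 ≤ a 0 ∧ a 2 ≤ a 1} => ebMu mu.1) := by
  rw [linearIndependent_iff']
  intro s
  induction s using Finset.strongInduction with
  | _ s ih =>
    intro g hsum i hi
    have hne : s.Nonempty := ⟨i, hi⟩
    obtain ⟨m, hm, hmax⟩ := s.exists_max_image (fun j => key (brkMu j.1)) hne
    have hcoeff : ∀ j ∈ s, j ≠ m → coeff (brkMu m.1) (ebMu j.1) = 0 := by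
      intro j hj hjm
      by_contra hc
      rcases (part1 j.1 j.2.1 j.2.2).2 _ hc with h | h
      · exact hjm (Subtype.ext (brkMu_inj j.2.1 j.2.2 m.2.1 m.2.2 h.symm))
      · rw [lexLt_iff] at h
        exact absurd (hmax j hj) (not_le.mpr h)
    have hgm : g m = 0 := by
      have hc := congrArg (coeff (brkMu m.1)) hsum
      rw [coeff_sum, coeff_zero] at hc
      rw [Finset.sum_eq_single m (fun j hj hjm => by rw [coeff_smul, hcoeff j hj hjm, smul_zero])
        (fun hnm => absurd hm hnm)] at hc
      rw [coeff_smul, (part1 m.1 m.2.1 m.2.2).1, smul_eq_mul, mul_one] at hc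
      exact hc
    rcases eq_or_ne i m with rfl | hne2
    · exact hgm
    · have hsum' : ∑ j ∈ s.erase m, g j • ebMu j.1 = 0 := by
        rw [← Finset.add_sum_erase s _ hm, hgm, zero_smul, zero_add] at hsum
        exact hsum
      exact ih (s.erase m) (Finset.erase_ssubset hm) g hsum' i (Finset.mem_erase.mpr ⟨hne2, hi⟩)

/-- For `n = 3`: the leading monomial of `ē_μ` in lexicographic order is `z^{[μ]}`
(with coefficient 1), and consequently the `ē_μ`, for `μ` ranging over partitions,
are linearly independent over `ℚ`. -/
theorem ebMu_leading_monomial_and_linearIndependent :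
    (∀ mu : Fin 3 → ℕ, mu 1 ≤ mu 0 → mu 2 ≤ mu 1 →
      coeff (brkMu mu) (ebMu mu) = 1 ∧
        ∀ ν : Fin 3 →₀ ℕ, coeff ν (ebMu mu) ≠ 0 → ν = brkMu mu ∨ LexLt ν (brkMu mu)) ∧
    LinearIndependent ℚ
      (fun mu : {a : Fin 3 → ℕ // a 1 ≤ a 0 ∧ a 2 ≤ a 1} => ebMu mu.1) := by
  exact ⟨fun mu h1 h2 => part1 mu h1 h2, part2⟩
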